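/- Suppose Δ^mon(K_n^c) < ⌊n/2⌋, every properly colored cycle in K_n^c has length at most ⌈n/2⌉ + 1, and P = (1, …, ℓ) is a longest properly colored path with sets X = {x : c(1,x) ≠ c(1,2)}, Y = {y : c(y,ℓ) ≠ c(ℓ−1,ℓ)}, x_p = max X, and y_s the largest element of Y such that c(ℓ, y_i) = c(y_i, y_i+1) for all y_i ∈ Y with y_i ≤ y_s. Then y_s ≤ x_p − 3. -/

import Mathlib

open Finset

/-- A properly colored cycle of length `L ≥ 3` in the edge-colored complete graph on
`Fin n` with coloring `c`, given by its vertex sequence `w 0, w 1, …, w (L-1)`. -/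
def IsPCCycle (n : ℕ) (c : Fin n → Fin n → ℕ) (L : ℕ) (w : ℕ → Fin n) : Prop :=
  3 ≤ L ∧ (∀ i j, i < L → j < L → w i = w j → i = j) ∧
    ∀ i < L, c (w i) (w ((i + 1) % L)) ≠ c (w ((i + 1) % L)) (w ((i + 2) % L))

/-- A properly colored path with `ℓ` vertices `v 1, v 2, …, v ℓ` (1-based indexing). -/
def IsPCPath (n : ℕ) (c : Fin n → Fin n → ℕ) (ℓ : ℕ) (v : ℕ → Fin n) : Prop :=
  (∀ i j, 1 ≤ i → i ≤ ℓ → 1 ≤ j → j ≤ ℓ → v i = v j → i = j) ∧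
    ∀ i, 1 ≤ i → i + 2 ≤ ℓ → c (v i) (v (i + 1)) ≠ c (v (i + 1)) (v (i + 2))

/-- `Δ^mon(K_n^c) < k`: every vertex is incident with fewer than `k`
edges of any single color. -/
def MaxMonDegLT (n : ℕ) (c : Fin n → Fin n → ℕ) (k : ℕ) : Prop :=
  ∀ v : Fin n, ∀ col : ℕ,
    ((Finset.univ.filter (fun u => u ≠ v ∧ c v u = col)).card) < k

/-- Helper: a convenient way to build a properly colored cycle, separating the two
"wrap-around" adjacency conditions from the interior ones. -/
private lemma mk_cycle {n : ℕ} {c : Fin n → Fin n → ℕ} {L : ℕ} {w : ℕ → Fin n}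
    (h3 : 3 ≤ L)
    (hinj : ∀ i j, i < L → j < L → w i = w j → i = j)
    (hmid : ∀ i, i + 2 < L → c (w i) (w (i+1)) ≠ c (w (i+1)) (w (i+2)))
    (hpen : c (w (L-2)) (w (L-1)) ≠ c (w (L-1)) (w 0))
    (hlast : c (w (L-1)) (w 0) ≠ c (w 0) (w 1)) :
    IsPCCycle n c L w := by
  refine ⟨h3, hinj, ?_⟩
  intro i hi
  rcases Nat.lt_trichotomy (i+2) L with h | h | h
  · rw [Nat.mod_eq_of_lt (by omega), Nat.mod_eq_of_lt h]
    exact hmid i h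
  · have e1 : (i+1) % L = L - 1 := by
      have := Nat.mod_eq_of_lt (show i+1 < L by omega)
      omega
    have e2 : (i+2) % L = 0 := by rw [h, Nat.mod_self]
    rw [e1, e2, show i = L - 2 by omega]
    exact hpen
  · have e1 : (i+1) % L = 0 := by rw [show i+1 = L by omega, Nat.mod_self]
    have e2 : (i+2) % L = 1 := by
      rw [show i+2 = L+1 by omega, Nat.add_mod_left, Nat.mod_eq_of_lt (by omega)]
    rw [e1, e2, show i = L - 1 by omega]
    exact hlast

/-- **Claim 1.** With `X = {x ∈ [1,ℓ] : c (v 1) (v x) ≠ c (v 1) (v 2)}`,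
`Y = {y ∈ [1,ℓ-1] : c (v y) (v ℓ) ≠ c (v (ℓ-1)) (v ℓ)}`, `x_p = max X` and `y_s`
the largest element of `Y` such that `c (v ℓ) (v yᵢ) = c (v yᵢ) (v (yᵢ+1))` for all
`yᵢ ∈ Y` with `yᵢ ≤ y_s`, we have `y_s ≤ x_p - 3`. -/
theorem claim1 (n : ℕ) (hn : 6 ≤ n) (c : Fin n → Fin n → ℕ)
    (hsym : ∀ u v, c u v = c v u) (hmon : MaxMonDegLT n c (n / 2))
    (hcyc : ∀ L w, IsPCCycle n c L w → L ≤ (n + 1) / 2 + 1)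
    (ℓ : ℕ) (v : ℕ → Fin n) (hP : IsPCPath n c ℓ v)
    (hlong : ∀ ℓ' v', IsPCPath n c ℓ' v' → ℓ' ≤ ℓ)
    (X : Finset ℕ)
    (hX : X = (Finset.Icc 1 ℓ).filter (fun x => c (v 1) (v x) ≠ c (v 1) (v 2)))
    (Y : Finset ℕ)
    (hY : Y = (Finset.Icc 1 (ℓ - 1)).filter
      (fun y => c (v y) (v ℓ) ≠ c (v (ℓ - 1)) (v ℓ)))
    (xp : ℕ) (hxp : xp ∈ X) (hxpmax : ∀ x ∈ X, x ≤ xp)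
    (ys : ℕ) (hys : ys ∈ Y)
    (hysgood : ∀ y ∈ Y, y ≤ ys → c (v ℓ) (v y) = c (v y) (v (y + 1)))
    (hysmax : ∀ y' ∈ Y, (∀ y ∈ Y, y ≤ y' → c (v ℓ) (v y) = c (v y) (v (y + 1))) →
      y' ≤ ys) :
    ys + 3 ≤ xp := by
  classical
  obtain ⟨hinj, hpc⟩ := hP
  by_contra hcon
  push_neg at hcon
  -- hcon : xp < ys + 3
  set m := (n+1)/2 with hm
  have hm3 : 3 ≤ m := by omega
  obtain ⟨⟨hxp1, hxpl⟩, hxpc⟩ : (1 ≤ xp ∧ xp ≤ ℓ) ∧ c (v 1) (v xp) ≠ c (v 1) (v 2) := by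
    rw [hX, Finset.mem_filter, Finset.mem_Icc] at hxp; exact hxp
  obtain ⟨⟨hys1, hysl⟩, hysc⟩ :
      (1 ≤ ys ∧ ys ≤ ℓ - 1) ∧ c (v ys) (v ℓ) ≠ c (v (ℓ-1)) (v ℓ) := by
    rw [hY, Finset.mem_filter, Finset.mem_Icc] at hys; exact hys
  -- ℓ ≤ n
  have hln : ℓ ≤ n := by
    have h : (Finset.Icc 1 ℓ).card ≤ (Finset.univ : Finset (Fin n)).card :=
      Finset.card_le_card_of_injOn v (fun a _ => Finset.mem_univ _)
        (by
          intro a ha b hb hab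
          simp only [Finset.coe_Icc, Set.mem_Icc] at ha hb
          exact hinj a b ha.1 ha.2 hb.1 hb.2 hab)
    simpa [Nat.card_Icc] using h
  -- no-escape at the front of the path
  have hfront : ∀ u : Fin n, c (v 1) u ≠ c (v 1) (v 2) →
      ∃ x, 1 ≤ x ∧ x ≤ ℓ ∧ u = v x := by
    intro u hu
    by_contra hno
    push_neg at hno
    have hPext : IsPCPath n c (ℓ+1) (fun i => if i = 1 then u else v (i-1)) := by
      constructor
      · intro i j hi1 hi2 hj1 hj2 hij
        try dsimp only at hij
        split_ifs at hij with h1 h2 h2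
        · omega
        · exact absurd hij (hno (j-1) (by omega) (by omega))
        · exact absurd hij.symm (hno (i-1) (by omega) (by omega))
        · have := hinj (i-1) (j-1) (by omega) (by omega) (by omega) (by omega) hij
          omega
      · intro i h1 h2
        try dsimp only
        by_cases hi : i = 1
        · subst hi
          rw [if_pos rfl, if_neg (by omega), if_neg (by omega)]
          show c u (v 1) ≠ c (v 1) (v 2)
          rw [hsym u (v 1)]
          exact hu
        · rw [if_neg hi, if_neg (by omega), if_neg (by omega)]
          have h := hpc (i-1) (by omega) (by omega)
          rw [show i-1+1 = i by omega, show i-1+2 = i+1 by omega] at h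
          rw [show i+1-1 = i by omega, show i+2-1 = i+1 by omega]
          exact h
    have := hlong (ℓ+1) _ hPext
    omega
  -- no-escape at the back of the path
  have hback : ∀ u : Fin n, c (v ℓ) u ≠ c (v (ℓ-1)) (v ℓ) →
      ∃ x, 1 ≤ x ∧ x ≤ ℓ ∧ u = v x := by
    intro u hu
    by_contra hno
    push_neg at hno
    have hPext : IsPCPath n c (ℓ+1) (fun i => if i ≤ ℓ then v i else u) := by
      constructor
      · intro i j hi1 hi2 hj1 hj2 hij
        try dsimp only at hij
        split_ifs at hij with h1 h2 h2
        · exact hinj i j hi1 h1 hj1 h2 hij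
        · exact absurd hij.symm (hno i (by omega) (by omega))
        · exact absurd hij (hno j (by omega) (by omega))
        · omega
      · intro i h1 h2
        try dsimp only
        by_cases hi : i + 2 ≤ ℓ
        · rw [if_pos (by omega), if_pos (by omega), if_pos hi]
          exact hpc i h1 hi
        · rw [if_pos (by omega), if_pos (by omega), if_neg (by omega)]
          rw [show i = ℓ-1 by omega, show ℓ-1+1 = ℓ by omega]
          exact hu.symm
    have := hlong (ℓ+1) _ hPext
    omega
  -- counting: xp ≥ m + 2
  have hxpm : m + 2 ≤ xp := by
    set S1 : Finset (Fin n) :=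
      Finset.univ.filter (fun u => u ≠ v 1 ∧ c (v 1) u ≠ c (v 1) (v 2)) with hS1
    set T1 : Finset (Fin n) :=
      Finset.univ.filter (fun u => u ≠ v 1 ∧ c (v 1) u = c (v 1) (v 2)) with hT1
    have hsub : Finset.univ.filter (fun u : Fin n => u ≠ v 1) ⊆ S1 ∪ T1 := by
      intro u hu
      simp only [hS1, hT1, Finset.mem_union, Finset.mem_filter, Finset.mem_univ,
        true_and] at hu ⊢
      tauto
    have hcard1 : (Finset.univ.filter (fun u : Fin n => u ≠ v 1)).card = n - 1 := by
      rw [Finset.filter_ne', Finset.card_erase_of_mem (Finset.mem_univ _)]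
      simp
    have hT1card : T1.card < n/2 := hmon (v 1) (c (v 1) (v 2))
    have hS1card : m ≤ S1.card := by
      have h1 := Finset.card_union_le S1 T1
      have h2 := Finset.card_le_card hsub
      omega
    have hmap : S1.card ≤ (Finset.Icc 3 xp).card := by
      apply Finset.card_le_card_of_surjOn v
      intro u hu
      have hu' : u ∈ S1 := Finset.mem_coe.mp hu
      rw [hS1, Finset.mem_filter] at hu'
      obtain ⟨-, hu1, hu2⟩ := hu'
      obtain ⟨x, hx1, hx2, hx3⟩ := hfront u hu2
      have hxne : c (v 1) (v x) ≠ c (v 1) (v 2) := by rw [← hx3]; exact hu2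
      have hxle : x ≤ xp := hxpmax x (by
        rw [hX, Finset.mem_filter, Finset.mem_Icc]; exact ⟨⟨hx1, hx2⟩, hxne⟩)
      have hx1' : x ≠ 1 := by rintro rfl; exact hu1 hx3
      have hx2' : x ≠ 2 := by rintro rfl; exact hxne rfl
      exact ⟨x, by simp only [Finset.coe_Icc, Set.mem_Icc]; omega, hx3.symm⟩
    have := Nat.card_Icc 3 xp
    omega
  -- counting: m ≤ |Y|
  have hYcard : m ≤ Y.card := by
    set S2 : Finset (Fin n) :=
      Finset.univ.filter (fun u => u ≠ v ℓ ∧ c (v ℓ) u ≠ c (v (ℓ-1)) (v ℓ)) with hS2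
    set T2 : Finset (Fin n) :=
      Finset.univ.filter (fun u => u ≠ v ℓ ∧ c (v ℓ) u = c (v (ℓ-1)) (v ℓ)) with hT2
    have hsub : Finset.univ.filter (fun u : Fin n => u ≠ v ℓ) ⊆ S2 ∪ T2 := by
      intro u hu
      simp only [hS2, hT2, Finset.mem_union, Finset.mem_filter, Finset.mem_univ,
        true_and] at hu ⊢
      tauto
    have hcard1 : (Finset.univ.filter (fun u : Fin n => u ≠ v ℓ)).card = n - 1 := by
      rw [Finset.filter_ne', Finset.card_erase_of_mem (Finset.mem_univ _)]
      simp
    have hT2card : T2.card < n/2 := hmon (v ℓ) (c (v (ℓ-1)) (v ℓ))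
    have hS2card : m ≤ S2.card := by
      have h1 := Finset.card_union_le S2 T2
      have h2 := Finset.card_le_card hsub
      omega
    have hmap : S2.card ≤ Y.card := by
      apply Finset.card_le_card_of_surjOn v
      intro u hu
      have hu' : u ∈ S2 := Finset.mem_coe.mp hu
      rw [hS2, Finset.mem_filter] at hu'
      obtain ⟨-, hu1, hu2⟩ := hu'
      obtain ⟨x, hx1, hx2, hx3⟩ := hback u hu2
      have hxne : c (v x) (v ℓ) ≠ c (v (ℓ-1)) (v ℓ) := by
        rw [hsym (v x) (v ℓ), ← hx3]; exact hu2
      have hxl : x ≠ ℓ := by rintro rfl; exact hu1 hx3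
      refine ⟨x, ?_, hx3.symm⟩
      rw [Finset.mem_coe, hY, Finset.mem_filter, Finset.mem_Icc]
      exact ⟨⟨hx1, by omega⟩, hxne⟩
    omega
  -- every element of Y is at most ℓ - 2
  have hYle : ∀ y ∈ Y, y ≤ ℓ - 2 := by
    intro y hy
    rw [hY, Finset.mem_filter, Finset.mem_Icc] at hy
    obtain ⟨⟨h1, h2⟩, h3⟩ := hy
    have : y ≠ ℓ - 1 := by rintro rfl; exact h3 rfl
    omega
  have hl2 : m + 2 ≤ ℓ := by
    have hsub : Y ⊆ Finset.Icc 1 (ℓ-2) := by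
      intro y hy
      have h2 := hYle y hy
      rw [hY, Finset.mem_filter, Finset.mem_Icc] at hy
      rw [Finset.mem_Icc]
      exact ⟨hy.1.1, h2⟩
    have := Finset.card_le_card hsub
    have := Nat.card_Icc 1 (ℓ-2)
    omega
  have hysle : ys ≤ ℓ - 2 := hYle ys hys
  -- Step II: the closing edge color equality at xp
  have hEq : c (v (xp-1)) (v xp) = c (v xp) (v 1) := by
    by_contra hA
    have hPC : IsPCCycle n c xp (fun i => v (i+1)) := by
      refine mk_cycle (by omega) ?_ ?_ ?_ ?_
      · intro i j hi hj hij
        have := hinj (i+1) (j+1) (by omega) (by omega) (by omega) (by omega) hij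
        omega
      · intro i h
        exact hpc (i+1) (by omega) (by omega)
      · rw [show xp-2+1 = xp-1 by omega, show xp-1+1 = xp by omega]
        exact hA
      · rw [show xp-1+1 = xp by omega]
        show c (v xp) (v 1) ≠ c (v 1) (v 2)
        rw [hsym (v xp) (v 1)]
        exact hxpc
    have := hcyc xp _ hPC
    omega
  rcases eq_or_lt_of_le hxpl with hxl | hxl
  · -- Case xp = ℓ
    rw [hxl] at hEq hxpc
    -- hEq : c (v (ℓ-1)) (v ℓ) = c (v ℓ) (v 1)
    have h1Y : c (v 1) (v ℓ) = c (v (ℓ-1)) (v ℓ) := by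
      rw [hsym (v 1) (v ℓ)]; exact hEq.symm
    have hl3 : m + 3 ≤ ℓ := by
      have hsub : Y ⊆ Finset.Icc 2 (ℓ-2) := by
        intro y hy
        have h2 := hYle y hy
        rw [hY, Finset.mem_filter, Finset.mem_Icc] at hy
        obtain ⟨⟨hh1, hh2⟩, hh3⟩ := hy
        have : y ≠ 1 := by rintro rfl; exact hh3 h1Y
        rw [Finset.mem_Icc]
        omega
      have := Finset.card_le_card hsub
      have := Nat.card_Icc 2 (ℓ-2)
      omega
    have hys2 : ys = ℓ - 2 := by omega
    have hgood : c (v ℓ) (v ys) = c (v ys) (v (ys+1)) := hysgood ys hys le_rfl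
    have hPC : IsPCCycle n c (ys+1) (fun i => if i < ys then v (i+1) else v ℓ) := by
      refine mk_cycle (by omega) ?_ ?_ ?_ ?_
      · intro i j hi hj hij
        try dsimp only at hij
        split_ifs at hij with h1 h2 h2
        · have := hinj (i+1) (j+1) (by omega) (by omega) (by omega) (by omega) hij
          omega
        · have := hinj (i+1) ℓ (by omega) (by omega) (by omega) (by omega) hij
          omega
        · have := hinj ℓ (j+1) (by omega) (by omega) (by omega) (by omega) hij
          omega
        · omega
      · intro i h
        try dsimp only
        by_cases h2 : i + 2 < ys
        · rw [if_pos (by omega), if_pos (by omega), if_pos h2]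
          exact hpc (i+1) (by omega) (by omega)
        · have h2' : i + 2 = ys := by omega
          rw [if_pos (by omega), if_pos (by omega), if_neg (by omega)]
          rw [show i+2 = ys from h2', show i+1 = ys-1 by omega,
            hsym (v ys) (v ℓ), hgood]
          have h := hpc (ys-1) (by omega) (by omega)
          rw [show ys-1+1 = ys by omega, show ys-1+2 = ys+1 by omega] at h
          exact h
      · rw [if_pos (show ys+1-2 < ys by omega), if_neg (show ¬(ys+1-1 < ys) by omega),
          if_pos (show 0 < ys by omega)]
        rw [show ys+1-2+1 = ys by omega]
        show c (v ys) (v ℓ) ≠ c (v ℓ) (v 1)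
        exact fun hc => hysc (hc.trans hEq.symm)
      · rw [if_neg (show ¬(ys+1-1 < ys) by omega), if_pos (show 0 < ys by omega),
          if_pos (show 1 < ys by omega)]
        show c (v ℓ) (v 1) ≠ c (v 1) (v 2)
        rw [hsym (v ℓ) (v 1)]
        exact hxpc
    have := hcyc (ys+1) _ hPC
    omega
  · -- Case xp < ℓ
    have hNe : c (v xp) (v 1) ≠ c (v xp) (v (xp+1)) := by
      have h := hpc (xp-1) (by omega) (by omega)
      rw [show xp-1+1 = xp by omega, show xp-1+2 = xp+1 by omega] at h
      rw [← hEq]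
      exact h
    -- choose a suitable good y
    obtain ⟨y, hyY, hy1, hy2, hy3⟩ :
        ∃ y, y ∈ Y ∧ xp + m + 1 ≤ y + ℓ ∧ y ≤ ys ∧ y + 1 ≤ xp := by
      by_cases hcase : ys + 1 ≤ xp
      · exact ⟨ys, hys, by omega, le_rfl, hcase⟩
      · by_contra hnone
        push_neg at hnone
        have hsubY : Y ⊆ Finset.Icc 1 (xp+m-ℓ) ∪ Finset.Icc xp (ℓ-2) := by
          intro y hy
          have hyle := hYle y hy
          have hy1' : 1 ≤ y := by
            rw [hY, Finset.mem_filter, Finset.mem_Icc] at hy; exact hy.1.1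
          rw [Finset.mem_union, Finset.mem_Icc, Finset.mem_Icc]
          by_cases hw : y + ℓ ≤ xp + m
          · left; omega
          · right
            have := hnone y hy (by omega)
            -- y ≤ ys fails or y + 1 ≤ xp fails; if y+1 ≤ xp then y ≤ ys
            by_cases hyx : y + 1 ≤ xp
            · exact absurd (this (by omega)) (by omega)
            · omega
        have h1 := Finset.card_le_card hsubY
        have h2 := Finset.card_union_le (Finset.Icc 1 (xp+m-ℓ)) (Finset.Icc xp (ℓ-2))
        have h3 := Nat.card_Icc 1 (xp+m-ℓ)
        have h4 := Nat.card_Icc xp (ℓ-2)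
        omega
    have hgy : c (v ℓ) (v y) = c (v y) (v (y+1)) := hysgood y hyY hy2
    have hycol : c (v y) (v ℓ) ≠ c (v (ℓ-1)) (v ℓ) := by
      rw [hY, Finset.mem_filter] at hyY; exact hyY.2
    have hy4 : 3 ≤ y := by omega
    have hyl : y ≤ ℓ - 2 := by omega
    set L := y + (ℓ - xp) + 1 with hL
    have hPC : IsPCCycle n c L
        (fun i => if i < y then v (i+1) else v (ℓ - (i - y))) := by
      refine mk_cycle (by omega) ?_ ?_ ?_ ?_
      · intro i j hi hj hij
        try dsimp only at hij
        split_ifs at hij with h1 h2 h2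
        · have := hinj (i+1) (j+1) (by omega) (by omega) (by omega) (by omega) hij
          omega
        · have := hinj (i+1) (ℓ-(j-y)) (by omega) (by omega) (by omega) (by omega) hij
          omega
        · have := hinj (ℓ-(i-y)) (j+1) (by omega) (by omega) (by omega) (by omega) hij
          omega
        · have := hinj (ℓ-(i-y)) (ℓ-(j-y)) (by omega) (by omega) (by omega)
            (by omega) hij
          omega
      · intro i h
        try dsimp only
        by_cases c1 : i + 2 < y
        · rw [if_pos (by omega), if_pos (by omega), if_pos c1]
          exact hpc (i+1) (by omega) (by omega)
        · by_cases c2 : i + 2 = y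
          · rw [if_pos (by omega), if_pos (by omega), if_neg (by omega)]
            rw [show i+2-y = 0 by omega, Nat.sub_zero]
            rw [show i+2 = y from c2, show i+1 = y-1 by omega,
              hsym (v y) (v ℓ), hgy]
            have hh := hpc (y-1) (by omega) (by omega)
            rw [show y-1+1 = y by omega, show y-1+2 = y+1 by omega] at hh
            exact hh
          · by_cases c3 : i + 1 = y
            · rw [if_pos (by omega), if_neg (by omega), if_neg (by omega)]
              rw [show i+1-y = 0 by omega, Nat.sub_zero, show i+2-y = 1 by omega]
              rw [show i+1 = y from c3]
              rw [hsym (v ℓ) (v (ℓ-1))]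
              exact hycol
            · rw [if_neg (by omega), if_neg (by omega), if_neg (by omega)]
              have hh := hpc (ℓ-(i+2-y)) (by omega) (by omega)
              rw [show ℓ-(i+2-y)+1 = ℓ-(i+1-y) by omega,
                show ℓ-(i+2-y)+2 = ℓ-(i-y) by omega] at hh
              rw [hsym (v (ℓ-(i-y))) (v (ℓ-(i+1-y))),
                hsym (v (ℓ-(i+1-y))) (v (ℓ-(i+2-y)))]
              exact hh.symm
      · rw [if_neg (show ¬(L-2 < y) by omega), if_neg (show ¬(L-1 < y) by omega),
          if_pos (show 0 < y by omega)]
        rw [show L-2-y = ℓ-xp-1 by omega, show L-1-y = ℓ-xp by omega,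
          show ℓ-(ℓ-xp-1) = xp+1 by omega, show ℓ-(ℓ-xp) = xp by omega]
        show c (v (xp+1)) (v xp) ≠ c (v xp) (v 1)
        rw [hsym (v (xp+1)) (v xp)]
        exact hNe.symm
      · rw [if_neg (show ¬(L-1 < y) by omega), if_pos (show 0 < y by omega),
          if_pos (show 1 < y by omega)]
        rw [show L-1-y = ℓ-xp by omega, show ℓ-(ℓ-xp) = xp by omega]
        show c (v xp) (v 1) ≠ c (v 1) (v 2)
        rw [hsym (v xp) (v 1)]
        exact hxpc
    have := hcyc L _ hPC
    omega
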